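/- Let 𝒮 be a 1-nested compatible set pair system on X and let (S,H) ∈ 𝒮 with H ≠ ∅. Then there exists a unique finite sequence (q₀,q₁,…,q_m) of elements of 𝒮 with m ≥ 2 such that: q_j covers q_{j+1} in the partial order (𝒮,≤) for all 0 ≤ j < m; q_m = (H,∅); every q_j with 1 ≤ j ≤ m−1 has second component equal to H; q_i = (S,H) for some 1 ≤ i ≤ m−1; and the first element q₀ = (S₊,H₊) satisfies S ∪ H ⊆ S₊ and H₊ ≠ H. -/

import Mathlib

open Set

variable {X : Type*}

/-- A set pair on `X`: an ordered pair `(S,H)` of subsets of `X` with `S ≠ ∅` and `S ∩ H = ∅`. -/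
def IsSetPair (p : Set X × Set X) : Prop :=
  p.1 ≠ ∅ ∧ p.1 ∩ p.2 = ∅

/-- A set pair system on `X`: a collection of set pairs on `X`. -/
def IsSPS (𝒮 : Set (Set X × Set X)) : Prop :=
  ∀ p ∈ 𝒮, IsSetPair p

/-- The strict relation `<` on set pairs: `(S₁,H₁) < (S₂,H₂)` iff they are distinct and
(a) `S₁ ∪ H₁ ⊆ S₂`, or (b) `S₁ ∪ H₁ ⊆ H₂`, or (c) `S₁ ⊊ S₂` and `H₁ = H₂ ≠ ∅`. -/
def splt (p q : Set X × Set X) : Prop :=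
  p ≠ q ∧ (p.1 ∪ p.2 ⊆ q.1 ∨ p.1 ∪ p.2 ⊆ q.2 ∨ (p.1 ⊂ q.1 ∧ p.2 = q.2 ∧ q.2 ≠ ∅))

/-- `(S₁,H₁) ≤ (S₂,H₂)` iff `(S₁,H₁) < (S₂,H₂)` or `(S₁,H₁) = (S₂,H₂)`. -/
def sple (p q : Set X × Set X) : Prop :=
  splt p q ∨ p = q

/-- Exactly one of four propositions holds. -/
def ExactlyOne4 (a b c d : Prop) : Prop :=
  (a ∧ ¬b ∧ ¬c ∧ ¬d) ∨ (¬a ∧ b ∧ ¬c ∧ ¬d) ∨ (¬a ∧ ¬b ∧ c ∧ ¬d) ∨ (¬a ∧ ¬b ∧ ¬c ∧ d)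

/-- Exactly one of three propositions holds. -/
def ExactlyOne3 (a b c : Prop) : Prop :=
  (a ∧ ¬b ∧ ¬c) ∨ (¬a ∧ b ∧ ¬c) ∨ (¬a ∧ ¬b ∧ c)

/-- A 1-nested compatible set pair system on `X`: a set pair system satisfying (NC1)–(NC5). -/
def OneNestedCompatible (𝒮 : Set (Set X × Set X)) : Prop :=
  IsSPS 𝒮 ∧
  -- (NC1)
  (((Set.univ : Set X), (∅ : Set X)) ∈ 𝒮) ∧
  -- (NC2)
  (∀ x : X, (({x} : Set X), (∅ : Set X)) ∈ 𝒮) ∧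
  -- (NC3)
  (∀ p ∈ 𝒮, p.2 ≠ ∅ → ((p.2, (∅ : Set X)) : Set X × Set X) ∈ 𝒮) ∧
  -- (NC4)
  (∀ p ∈ 𝒮, ∀ q ∈ 𝒮, p ≠ q →
    ExactlyOne4 (splt p q) (splt q p)
      ((p.1 ∪ p.2) ∩ (q.1 ∪ q.2) = ∅)
      (p.1 ∩ q.1 = ∅ ∧ p.2 = q.2 ∧ p.2 ≠ ∅)) ∧
  -- (NC5)
  (¬ ∃ p ∈ 𝒮, ∃ q ∈ 𝒮, ∃ r ∈ 𝒮,
    p.2 = q.2 ∧ q.2 = r.2 ∧ p.2 ≠ ∅ ∧ p.1 ∩ q.1 = ∅ ∧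
    (p.1 ∪ q.1 ⊆ r.1 ∨ (p.1 ∪ q.1) ∩ r.1 = ∅))

/-- `p` covers `q` in the partial order `(𝒮,≤)`: an arc from `p` to `q`
in the Hasse diagram `D(𝒮)`; `p` is a parent of `q`, and `q` is a child of `p`. -/
def SPCovers (𝒮 : Set (Set X × Set X)) (p q : Set X × Set X) : Prop :=
  p ∈ 𝒮 ∧ q ∈ 𝒮 ∧ splt q p ∧ ¬ ∃ r ∈ 𝒮, splt q r ∧ splt r p

/-- `L` is the directed path `P(S,H)` in `D(𝒮)` associated with `(S,H) ∈ 𝒮`, `H ≠ ∅`: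
a sequence `(q₀,…,q_m)` of elements of `𝒮` with `m ≥ 2` in which `q_j` covers `q_{j+1}`,
such that `q_m = (H,∅)`, every interior `q_j` (`1 ≤ j ≤ m-1`) has second component `H`,
`q_i = (S,H)` for some `1 ≤ i ≤ m-1`, and the first element `q₀ = (S₊,H₊)` satisfies
`S ∪ H ⊆ S₊` and `H₊ ≠ H`. -/
def IsSPPath (𝒮 : Set (Set X × Set X)) (S H : Set X) (L : List (Set X × Set X)) : Prop :=
  3 ≤ L.length ∧
  List.Chain' (fun a b => SPCovers 𝒮 a b) L ∧
  L.getLast? = some ((H, (∅ : Set X)) : Set X × Set X) ∧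
  (∀ i : ℕ, ∀ p : Set X × Set X, 1 ≤ i → i + 1 < L.length → L[i]? = some p → p.2 = H) ∧
  (∃ i : ℕ, 1 ≤ i ∧ i + 1 < L.length ∧ L[i]? = some ((S, H) : Set X × Set X)) ∧
  (∃ p : Set X × Set X, L.head? = some p ∧ S ∪ H ⊆ p.1 ∧ p.2 ≠ H)

/-- A directed path in the Hasse diagram `D(𝒮)`: a sequence of at least two elements of `𝒮`
in which each element covers the next. -/
def IsDirPath (𝒮 : Set (Set X × Set X)) (L : List (Set X × Set X)) : Prop :=
  2 ≤ L.length ∧ List.Chain' (fun a b => SPCovers 𝒮 a b) L ∧ ∀ p ∈ L, p ∈ 𝒮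


section AuxLemmas

variable {X : Type*}

lemma pair_nonempty {𝒮 : Set (Set X × Set X)} (hS : IsSPS 𝒮) {p : Set X × Set X}
    (hp : p ∈ 𝒮) : p.1.Nonempty :=
  Set.nonempty_iff_ne_empty.mpr (hS p hp).1

lemma pair_disj {𝒮 : Set (Set X × Set X)} (hS : IsSPS 𝒮) {p : Set X × Set X}
    (hp : p ∈ 𝒮) {x : X} (hx : x ∈ p.1) (hx2 : x ∈ p.2) : False :=
  Set.eq_empty_iff_forall_notMem.mp (hS p hp).2 x ⟨hx, hx2⟩

lemma splt_asymm {𝒮 : Set (Set X × Set X)} (hS : IsSPS 𝒮) {p q : Set X × Set X}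
    (hp : p ∈ 𝒮) (hq : q ∈ 𝒮) (h1 : splt p q) (h2 : splt q p) : False := by
  obtain ⟨hne, h1⟩ := h1
  obtain ⟨-, h2⟩ := h2
  obtain ⟨x, hx⟩ := pair_nonempty hS hp
  obtain ⟨y, hy⟩ := pair_nonempty hS hq
  rcases h1 with h1 | h1 | h1 <;> rcases h2 with h2 | h2 | h2
  · -- p∪ ⊆ q.1, q∪ ⊆ p.1
    have e1 : p.1 ⊆ q.1 := fun z hz => h1 (Or.inl hz)
    have e2 : q.1 ⊆ p.1 := fun z hz => h2 (Or.inl hz)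
    have e3 : p.2 ⊆ p.1 := fun z hz => e2 (h1 (Or.inr hz))
    have e4 : q.2 ⊆ q.1 := fun z hz => e1 (h2 (Or.inr hz))
    have hp2 : p.2 = ∅ := Set.eq_empty_iff_forall_notMem.mpr
      (fun z hz => pair_disj hS hp (e3 hz) hz)
    have hq2 : q.2 = ∅ := Set.eq_empty_iff_forall_notMem.mpr
      (fun z hz => pair_disj hS hq (e4 hz) hz)
    exact hne (Prod.ext (le_antisymm e1 e2) (hp2.trans hq2.symm))
  · exact pair_disj hS hp hx (h2 (Or.inl (h1 (Or.inl hx))))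
  · exact h2.1.not_subset (fun z hz => h1 (Or.inl hz))
  · exact pair_disj hS hq hy (h1 (Or.inl (h2 (Or.inl hy))))
  · exact pair_disj hS hp hx (h2 (Or.inr (h1 (Or.inl hx))))
  · exact pair_disj hS hp hx (h2.2.1 ▸ h1 (Or.inl hx))
  · exact h1.1.not_subset (fun z hz => h2 (Or.inl hz))
  · exact pair_disj hS hq hy (h1.2.1 ▸ h2 (Or.inl hy))
  · exact h1.1.not_subset h2.1.subset

lemma splt_trans' {𝒮 : Set (Set X × Set X)} (hS : IsSPS 𝒮) {p q r : Set X × Set X}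
    (hp : p ∈ 𝒮) (hq : q ∈ 𝒮) (hr : r ∈ 𝒮) (h1 : splt p q) (h2 : splt q r) :
    splt p r := by
  have hne : p ≠ r := by
    rintro rfl
    exact splt_asymm hS hp hq h1 h2
  refine ⟨hne, ?_⟩
  obtain ⟨-, h1'⟩ := h1
  obtain ⟨-, h2'⟩ := h2
  rcases h1' with h1' | h1' | h1' <;> rcases h2' with h2' | h2' | h2'
  · exact Or.inl (fun z hz => h2' (Or.inl (h1' hz)))
  · exact Or.inr (Or.inl (fun z hz => h2' (Or.inl (h1' hz))))
  · exact Or.inl (fun z hz => h2'.1.subset (h1' hz))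
  · exact Or.inl (fun z hz => h2' (Or.inr (h1' hz)))
  · exact Or.inr (Or.inl (fun z hz => h2' (Or.inr (h1' hz))))
  · exact Or.inr (Or.inl (h2'.2.1 ▸ h1'))
  · refine Or.inl (fun z hz => ?_)
    rcases hz with hz | hz
    · exact h2' (Or.inl (h1'.1.subset hz))
    · exact h2' (Or.inr (h1'.2.1 ▸ hz))
  · refine Or.inr (Or.inl (fun z hz => ?_))
    rcases hz with hz | hz
    · exact h2' (Or.inl (h1'.1.subset hz))
    · exact h2' (Or.inr (h1'.2.1 ▸ hz))
  · exact Or.inr (Or.inr ⟨h1'.1.trans h2'.1, h1'.2.1.trans h2'.2.1, h2'.2.2⟩)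

/-- The chain of elements of `𝒮` with second component `H` comparable to `S`. -/
def Cset (𝒮 : Set (Set X × Set X)) (S H : Set X) : Set (Set X × Set X) :=
  {p | p ∈ 𝒮 ∧ p.2 = H ∧ (p.1 ⊆ S ∨ S ⊆ p.1)}

section Structure

variable {𝒮 : Set (Set X × Set X)} {S H : Set X}

lemma eo4_or {a b c d : Prop} (h : ExactlyOne4 a b c d) : a ∨ b ∨ c ∨ d := by
  unfold ExactlyOne4 at h; tauto

lemma H_ne_mem (hH : H ≠ ∅) : H.Nonempty := Set.nonempty_iff_ne_empty.mpr hH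

lemma splt_T_iff (h : OneNestedCompatible 𝒮) (hH : H ≠ ∅) {p q : Set X × Set X}
    (hp : p ∈ 𝒮) (hq : q ∈ 𝒮) (hp2 : p.2 = H) (hq2 : q.2 = H) :
    splt p q ↔ p.1 ⊂ q.1 := by
  constructor
  · rintro ⟨hne, hc | hc | hc⟩
    · obtain ⟨x, hx⟩ := H_ne_mem hH
      exact absurd (hq2 ▸ hx) (fun hx2 => pair_disj h.1 hq (hc (Or.inr (hp2 ▸ hx))) hx2)
    · obtain ⟨x, hx⟩ := pair_nonempty h.1 hp
      exact absurd (hq2 ▸ hc (Or.inl hx)) (fun hx2 => pair_disj h.1 hp hx (hp2 ▸ hx2))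
    · exact hc.1
  · intro hlt
    refine ⟨fun he => hlt.ne (congrArg Prod.fst he), Or.inr (Or.inr ⟨hlt, hp2.trans hq2.symm, hq2 ▸ hH⟩)⟩

lemma T_tricho (h : OneNestedCompatible 𝒮) (hH : H ≠ ∅) {p q : Set X × Set X}
    (hp : p ∈ 𝒮) (hq : q ∈ 𝒮) (hp2 : p.2 = H) (hq2 : q.2 = H) (hne : p ≠ q) :
    p.1 ⊂ q.1 ∨ q.1 ⊂ p.1 ∨ p.1 ∩ q.1 = ∅ := by
  rcases eo4_or (h.2.2.2.2.1 p hp q hq hne) with hc | hc | hc | hc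
  · exact Or.inl ((splt_T_iff h hH hp hq hp2 hq2).mp hc)
  · exact Or.inr (Or.inl ((splt_T_iff h hH hq hp hq2 hp2).mp hc))
  · obtain ⟨x, hx⟩ := H_ne_mem hH
    exact absurd hc (by
      intro he
      exact Set.eq_empty_iff_forall_notMem.mp he x
        ⟨Or.inr (hp2 ▸ hx), Or.inr (hq2 ▸ hx)⟩)
  · exact Or.inr (Or.inr hc.1)

lemma comp_trans (h : OneNestedCompatible 𝒮) (hH : H ≠ ∅) {p q r : Set X × Set X}
    (hp : p ∈ 𝒮) (hq : q ∈ 𝒮) (hr : r ∈ 𝒮)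
    (hp2 : p.2 = H) (hq2 : q.2 = H) (hr2 : r.2 = H)
    (h1 : p.1 ⊆ q.1 ∨ q.1 ⊆ p.1) (h2 : q.1 ⊆ r.1 ∨ r.1 ⊆ q.1) :
    p.1 ⊆ r.1 ∨ r.1 ⊆ p.1 := by
  by_contra hcon
  push_neg at hcon
  obtain ⟨hc1, hc2⟩ := hcon
  have hne : p ≠ r := by rintro rfl; exact hc1 subset_rfl
  have hd : p.1 ∩ r.1 = ∅ := by
    rcases T_tricho h hH hp hr hp2 hr2 hne with hc | hc | hc
    · exact absurd hc.subset hc1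
    · exact absurd hc.subset hc2
    · exact hc
  rcases h1 with h1 | h1 <;> rcases h2 with h2 | h2
  · exact hc1 (h1.trans h2)
  · exact h.2.2.2.2.2 ⟨p, hp, r, hr, q, hq, hp2.trans hr2.symm, hr2.trans hq2.symm,
      hp2 ▸ hH, hd, Or.inl (Set.union_subset h1 h2)⟩
  · obtain ⟨x, hx⟩ := pair_nonempty h.1 hq
    exact Set.eq_empty_iff_forall_notMem.mp hd x ⟨h1 hx, h2 hx⟩
  · exact hc2 (h2.trans h1)

lemma SH_mem_C (hmem : ((S, H) : Set X × Set X) ∈ 𝒮) : ((S, H) : Set X × Set X) ∈ Cset 𝒮 S H :=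
  ⟨hmem, rfl, Or.inl subset_rfl⟩

lemma C_sub (hp : p ∈ Cset 𝒮 S H) : p ∈ 𝒮 ∧ p.2 = H := ⟨hp.1, hp.2.1⟩

lemma C_comparable (h : OneNestedCompatible 𝒮) (hH : H ≠ ∅)
    (hmem : ((S, H) : Set X × Set X) ∈ 𝒮) {p q : Set X × Set X}
    (hp : p ∈ Cset 𝒮 S H) (hq : q ∈ Cset 𝒮 S H) : p.1 ⊆ q.1 ∨ q.1 ⊆ p.1 :=
  comp_trans h hH hp.1 hmem hq.1 hp.2.1 rfl hq.2.1 hp.2.2 hq.2.2.symm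

lemma C_closed (h : OneNestedCompatible 𝒮) (hH : H ≠ ∅)
    (hmem : ((S, H) : Set X × Set X) ∈ 𝒮) {r c : Set X × Set X}
    (hr : r ∈ 𝒮) (hr2 : r.2 = H) (hc : c ∈ Cset 𝒮 S H)
    (hcomp : r.1 ⊆ c.1 ∨ c.1 ⊆ r.1) : r ∈ Cset 𝒮 S H :=
  ⟨hr, hr2, comp_trans h hH hr hc.1 hmem hr2 hc.2.1 rfl hcomp hc.2.2⟩

lemma C_eq (hp : p ∈ Cset 𝒮 S H) (hq : q ∈ Cset 𝒮 S H)
    (h1 : p.1 ⊆ q.1) (h2 : q.1 ⊆ p.1) : p = q :=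
  Prod.ext (le_antisymm h1 h2) (hp.2.1.trans hq.2.1.symm)

lemma C_max_of [Fintype X] (h : OneNestedCompatible 𝒮) (hH : H ≠ ∅)
    (hmem : ((S, H) : Set X × Set X) ∈ 𝒮) {D : Set (Set X × Set X)}
    (hD : D ⊆ Cset 𝒮 S H) (hne : D.Nonempty) :
    ∃ m ∈ D, ∀ p ∈ D, p.1 ⊆ m.1 := by
  obtain ⟨m, hm, hmax⟩ := Set.Finite.exists_maximalFor (fun p => p.1.ncard) D (Set.toFinite D) hne
  refine ⟨m, hm, fun p hp => ?_⟩
  rcases C_comparable h hH hmem (hD hp) (hD hm) with hc | hc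
  · exact hc
  · have := hmax hp (Set.ncard_le_ncard hc (Set.toFinite _))
    exact (Set.eq_of_subset_of_ncard_le hc this (Set.toFinite _)).symm.subset

lemma cover_within_C (h : OneNestedCompatible 𝒮) (hH : H ≠ ∅)
    (hmem : ((S, H) : Set X × Set X) ∈ 𝒮) {a b : Set X × Set X}
    (ha : a ∈ Cset 𝒮 S H) (hb : b ∈ Cset 𝒮 S H) (hlt : b.1 ⊂ a.1)
    (hno : ¬ ∃ r ∈ Cset 𝒮 S H, b.1 ⊂ r.1 ∧ r.1 ⊂ a.1) : SPCovers 𝒮 a b := by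
  refine ⟨ha.1, hb.1, (splt_T_iff h hH hb.1 ha.1 hb.2.1 ha.2.1).mpr hlt, ?_⟩
  rintro ⟨r, hrS, hbr, hra⟩
  have haH : ∀ x ∈ H, x ∉ a.1 := fun x hx hx1 => pair_disj h.1 ha.1 hx1 (ha.2.1.symm ▸ hx)
  obtain ⟨x, hxH⟩ := H_ne_mem hH
  obtain ⟨hner, hcr⟩ := hra
  obtain ⟨hneb, hcb⟩ := hbr
  rcases hcr with hcr | hcr | hcr
  · -- r.1 ∪ r.2 ⊆ a.1
    have hHr : H ⊆ r.1 ∪ r.2 := by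
      rcases hcb with hcb | hcb | hcb
      · exact fun z hz => Or.inl (hcb (Or.inr (hb.2.1.symm ▸ hz)))
      · exact fun z hz => Or.inr (hcb (Or.inr (hb.2.1.symm ▸ hz)))
      · exact fun z hz => Or.inr ((hcb.2.1.symm.trans hb.2.1).symm ▸ hz)
    exact haH x hxH (hcr (hHr hxH))
  · -- r.1 ∪ r.2 ⊆ a.2 = H
    rcases hcb with hcb | hcb | hcb
    · obtain ⟨y, hy⟩ := pair_nonempty h.1 hb.1
      exact pair_disj h.1 hb.1 hy (hb.2.1.symm ▸ (ha.2.1 ▸ hcr (Or.inl (hcb (Or.inl hy))) : _ ∈ H))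
    · obtain ⟨y, hy⟩ := pair_nonempty h.1 hb.1
      exact pair_disj h.1 hb.1 hy (hb.2.1.symm ▸ (ha.2.1 ▸ hcr (Or.inr (hcb (Or.inl hy))) : _ ∈ H))
    · obtain ⟨y, hy⟩ := pair_nonempty h.1 hrS
      have hr2H : r.2 = H := hcb.2.1.symm.trans hb.2.1
      have hyH : y ∈ H := ha.2.1 ▸ hcr (Or.inl hy)
      exact pair_disj h.1 hrS hy (hr2H.symm ▸ hyH)
  · -- r.1 ⊂ a.1, r.2 = a.2
    have hr2 : r.2 = H := hcr.2.1.trans ha.2.1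
    rcases hcb with hcb | hcb | hcb
    · exact pair_disj h.1 hrS (hcb (Or.inr (hb.2.1.symm ▸ hxH))) (hr2.symm ▸ hxH)
    · obtain ⟨y, hy⟩ := pair_nonempty h.1 hb.1
      exact pair_disj h.1 hb.1 hy (hb.2.1.symm ▸ (hr2 ▸ hcb (Or.inl hy) : _ ∈ H))
    · exact hno ⟨r, C_closed h hH hmem hrS hr2 ha (Or.inl hcr.1.subset), hcb.1, hcr.1⟩

lemma bot_mem (h : OneNestedCompatible 𝒮) (hmem : ((S, H) : Set X × Set X) ∈ 𝒮)
    (hH : H ≠ ∅) : ((H, (∅ : Set X)) : Set X × Set X) ∈ 𝒮 :=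
  h.2.2.2.1 (S, H) hmem hH

lemma bot_ne (hH : H ≠ ∅) {b : Set X × Set X} (hb2 : b.2 = H) :
    ((H, (∅ : Set X)) : Set X × Set X) ≠ b := fun he =>
  hH (hb2.symm.trans (congrArg Prod.snd he).symm)

lemma splt_bot (hH : H ≠ ∅) {b : Set X × Set X} (hb2 : b.2 = H) :
    splt ((H, (∅ : Set X)) : Set X × Set X) b :=
  ⟨bot_ne hH hb2, Or.inr (Or.inl (by simp [hb2]))⟩

lemma cover_bot (h : OneNestedCompatible 𝒮) (hH : H ≠ ∅)
    (hmem : ((S, H) : Set X × Set X) ∈ 𝒮) {b : Set X × Set X}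
    (hb : b ∈ Cset 𝒮 S H) (hno : ¬ ∃ r ∈ Cset 𝒮 S H, r.1 ⊂ b.1) :
    SPCovers 𝒮 b ((H, (∅ : Set X)) : Set X × Set X) := by
  refine ⟨hb.1, bot_mem h hmem hH, splt_bot hH hb.2.1, ?_⟩
  rintro ⟨r, hrS, h1, h2⟩
  obtain ⟨hne1, hc1⟩ := h1
  have hHr : H ⊆ r.1 ∨ H ⊆ r.2 := by
    rcases hc1 with hc | hc | hc
    · exact Or.inl (fun z hz => hc (Or.inl hz))
    · exact Or.inr (fun z hz => hc (Or.inl hz))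
    · exact absurd hc.2.1.symm hc.2.2
  obtain ⟨hne2, hc2⟩ := h2
  rcases hc2 with hc2 | hc2 | hc2
  · obtain ⟨x, hxH⟩ := H_ne_mem hH
    have hxr : x ∈ r.1 ∪ r.2 := by rcases hHr with hr | hr; exacts [Or.inl (hr hxH), Or.inr (hr hxH)]
    exact pair_disj h.1 hb.1 (hc2 hxr) (hb.2.1.symm ▸ hxH)
  · -- r.1 ∪ r.2 ⊆ b.2 = H
    have hrH : r.1 ∪ r.2 ⊆ H := hb.2.1 ▸ hc2
    rcases hHr with hr | hr
    · have e1 : r.1 = H := le_antisymm (fun z hz => hrH (Or.inl hz)) hr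
      have e2 : r.2 = ∅ := Set.eq_empty_iff_forall_notMem.mpr
        (fun z hz => pair_disj h.1 hrS (e1.symm ▸ hrH (Or.inr hz)) hz)
      exact hne1 (Prod.ext e1.symm e2.symm)
    · obtain ⟨y, hy⟩ := pair_nonempty h.1 hrS
      have e1 : r.2 = H := le_antisymm (fun z hz => hrH (Or.inr hz)) hr
      exact pair_disj h.1 hrS hy (e1.symm ▸ hrH (Or.inl hy))
  · exact hno ⟨r, C_closed h hH hmem hrS (hc2.2.1.trans hb.2.1) hb (Or.inl hc2.1.subset), hc2.1⟩

lemma cover_max_props (h : OneNestedCompatible 𝒮) (hH : H ≠ ∅)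
    (hmem : ((S, H) : Set X × Set X) ∈ 𝒮) {c p : Set X × Set X}
    (hc : c ∈ Cset 𝒮 S H) (hcmax : ∀ q ∈ Cset 𝒮 S H, q.1 ⊆ c.1)
    (hp : SPCovers 𝒮 p c) : c.1 ∪ H ⊆ p.1 ∧ p.2 ≠ H := by
  obtain ⟨hpS, hcS, hsplt, hnomid⟩ := hp
  obtain ⟨hne, hcond⟩ := hsplt
  rcases hcond with hcond | hcond | hcond
  · constructor
    · intro z hz
      rcases hz with hz | hz
      · exact hcond (Or.inl hz)
      · exact hcond (Or.inr (hc.2.1.symm ▸ hz))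
    · intro hp2
      obtain ⟨x, hxH⟩ := H_ne_mem hH
      exact pair_disj h.1 hpS (hcond (Or.inr (hc.2.1.symm ▸ hxH))) (hp2.symm ▸ hxH)
  · -- c.1 ∪ c.2 ⊆ p.2 : impossible via (p.2, ∅)
    exfalso
    obtain ⟨y, hy⟩ := pair_nonempty h.1 hcS
    have hp2ne : p.2 ≠ ∅ := fun he => (he ▸ hcond (Or.inl hy) : y ∈ (∅ : Set X))
    have hq'S : ((p.2, (∅ : Set X)) : Set X × Set X) ∈ 𝒮 := h.2.2.2.1 p hpS hp2ne
    refine hnomid ⟨(p.2, ∅), hq'S, ⟨?_, Or.inl hcond⟩, ⟨?_, Or.inr (Or.inl (by simp))⟩⟩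
    · intro he
      exact (hc.2.1 ▸ hH : c.2 ≠ ∅) (congrArg Prod.snd he)
    · intro he
      exact hp2ne (congrArg Prod.snd he).symm
  · exfalso
    exact hcond.1.not_subset
      (hcmax p (C_closed h hH hmem hpS (hcond.2.1.symm.trans hc.2.1) hc (Or.inr hcond.1.subset)))

lemma mu_lt [Fintype X] (hS : IsSPS 𝒮) {r p : Set X × Set X}
    (hr : r ∈ 𝒮) (hp : p ∈ 𝒮) (hs : splt r p) :
    (Fintype.card X + 1) * (r.1 ∪ r.2).ncard + r.1.ncard <
      (Fintype.card X + 1) * (p.1 ∪ p.2).ncard + p.1.ncard := by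
  have hbound : ∀ s : Set X, s.ncard ≤ Fintype.card X := fun s => by
    simpa [Set.ncard_univ, Nat.card_eq_fintype_card] using
      Set.ncard_le_ncard (Set.subset_univ s) (Set.toFinite _)
  have key : ∀ {a b : ℕ}, a < b →
      (Fintype.card X + 1) * a + r.1.ncard < (Fintype.card X + 1) * b + p.1.ncard := by
    intro a b hab
    calc (Fintype.card X + 1) * a + r.1.ncard
        < (Fintype.card X + 1) * (a + 1) := by
          have := hbound r.1; nlinarith
      _ ≤ (Fintype.card X + 1) * b := Nat.mul_le_mul_left _ hab
      _ ≤ (Fintype.card X + 1) * b + p.1.ncard := Nat.le_add_right _ _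
  obtain ⟨hne, hcond⟩ := hs
  rcases hcond with hcond | hcond | hcond
  · have h1 : (r.1 ∪ r.2).ncard ≤ (p.1 ∪ p.2).ncard :=
      Set.ncard_le_ncard (hcond.trans Set.subset_union_left) (Set.toFinite _)
    rcases lt_or_eq_of_le h1 with h1 | h1
    · exact key h1
    · -- equality case
      have e1 : r.1 ∪ r.2 = p.1 ∪ p.2 :=
        Set.eq_of_subset_of_ncard_le (hcond.trans Set.subset_union_left) h1.ge (Set.toFinite _)
      have e2 : p.1 ∪ p.2 = p.1 := le_antisymm (e1 ▸ hcond.trans (by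
        intro z hz
        exact hz) |>.trans (subset_refl _) |> fun _ => by
          intro z hz
          rw [← e1] at hz
          exact hcond hz) Set.subset_union_left
      have hp2 : p.2 = ∅ := Set.eq_empty_iff_forall_notMem.mpr
        (fun z hz => pair_disj hS hp (e2 ▸ Set.mem_union_right _ hz) hz)
      have hr1 : r.1 ⊂ p.1 := by
        refine ⟨fun z hz => hcond (Or.inl hz), fun hsub => ?_⟩
        have hr2 : r.2 = ∅ := Set.eq_empty_iff_forall_notMem.mpr (fun z hz =>
          pair_disj hS hr (hsub (hcond (Or.inr hz))) hz)
        have : r.1 = p.1 := le_antisymm (fun z hz => hcond (Or.inl hz)) (by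
          intro z hz
          have : z ∈ r.1 ∪ r.2 := by rw [e1]; exact Or.inl hz
          rcases this with h' | h'
          · exact h'
          · exact absurd h' (by rw [hr2]; exact notMem_empty z))
        exact hne (Prod.ext this (hr2.trans hp2.symm))
      have := Set.ncard_lt_ncard hr1 (Set.toFinite _)
      rw [h1]
      omega
  · have h1 : (r.1 ∪ r.2).ncard < (p.1 ∪ p.2).ncard := by
      refine Set.ncard_lt_ncard ⟨hcond.trans Set.subset_union_right, fun hsub => ?_⟩ (Set.toFinite _)
      obtain ⟨x, hx⟩ := pair_nonempty hS hp
      rcases hsub (Set.mem_union_left _ hx) with h' | h'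
      · exact pair_disj hS hp hx (hcond (Or.inl h'))
      · exact pair_disj hS hp hx (hcond (Or.inr h'))
    exact key h1
  · have h1 : (r.1 ∪ r.2).ncard < (p.1 ∪ p.2).ncard := by
      refine Set.ncard_lt_ncard ⟨?_, fun hsub => ?_⟩ (Set.toFinite _)
      · exact Set.union_subset_union hcond.1.subset hcond.2.1.subset
      · obtain ⟨x, hx, hnx⟩ := Set.exists_of_ssubset hcond.1
        rcases hsub (Set.mem_union_left _ hx) with h' | h'
        · exact hnx h'
        · exact pair_disj hS hp hx (hcond.2.1 ▸ h')
    exact key h1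

lemma exists_cover [Fintype X] (h : OneNestedCompatible 𝒮) {c : Set X × Set X}
    (hcS : c ∈ 𝒮) (hc2 : c.2 ≠ ∅) : ∃ p, SPCovers 𝒮 p c := by
  set UB : Set (Set X × Set X) := {p | p ∈ 𝒮 ∧ splt c p} with hUB
  have hne : UB.Nonempty := by
    refine ⟨((Set.univ : Set X), (∅ : Set X)), h.2.1, ⟨?_, Or.inl (Set.subset_univ _)⟩⟩
    intro he
    exact hc2 (congrArg Prod.snd he)
  obtain ⟨p, hpUB, hmin⟩ := Set.Finite.exists_minimalFor
    (fun p => (Fintype.card X + 1) * (p.1 ∪ p.2).ncard + p.1.ncard) UB (Set.toFinite _) hne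
  refine ⟨p, hpUB.1, hcS, hpUB.2, ?_⟩
  rintro ⟨r, hrS, h1, h2⟩
  have hrUB : r ∈ UB := ⟨hrS, h1⟩
  have hlt := mu_lt h.1 hrS hpUB.1 h2
  have := hmin hrUB (le_of_lt hlt)
  beta_reduce at this
  omega

lemma cover_unique_above (h : OneNestedCompatible 𝒮) (hH : H ≠ ∅)
    {c p p' : Set X × Set X} (hp : SPCovers 𝒮 p c) (hp' : SPCovers 𝒮 p' c)
    (hHp : H ⊆ p.1) (hHp' : H ⊆ p'.1) : p = p' := by
  by_contra hne
  obtain ⟨x, hxH⟩ := H_ne_mem hH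
  rcases eo4_or (h.2.2.2.2.1 p hp.1 p' hp'.1 hne) with hc | hc | hc | hc
  · exact hp'.2.2.2 ⟨p, hp.1, hp.2.2.1, hc⟩
  · exact hp.2.2.2 ⟨p', hp'.1, hp'.2.2.1, hc⟩
  · exact Set.eq_empty_iff_forall_notMem.mp hc x ⟨Or.inl (hHp hxH), Or.inl (hHp' hxH)⟩
  · exact Set.eq_empty_iff_forall_notMem.mp hc.1 x ⟨hHp hxH, hHp' hxH⟩

lemma cover_child_unique_C (h : OneNestedCompatible 𝒮) (hH : H ≠ ∅)
    (hmem : ((S, H) : Set X × Set X) ∈ 𝒮) {a b b' : Set X × Set X}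
    (hb : b ∈ Cset 𝒮 S H) (hb' : b' ∈ Cset 𝒮 S H)
    (h1 : SPCovers 𝒮 a b) (h2 : SPCovers 𝒮 a b') : b = b' := by
  rcases C_comparable h hH hmem hb hb' with hc | hc
  · by_cases hc' : b'.1 ⊆ b.1
    · exact C_eq hb hb' hc hc'
    · exact (h1.2.2.2 ⟨b', hb'.1,
        (splt_T_iff h hH hb.1 hb'.1 hb.2.1 hb'.2.1).mpr ⟨hc, hc'⟩, h2.2.2.1⟩).elim
  · by_cases hc' : b.1 ⊆ b'.1
    · exact C_eq hb hb' hc' hc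
    · exact (h2.2.2.2 ⟨b, hb.1,
        (splt_T_iff h hH hb'.1 hb.1 hb'.2.1 hb.2.1).mpr ⟨hc, hc'⟩, h1.2.2.1⟩).elim

lemma not_cover_bot_and_C (hH : H ≠ ∅) {a b : Set X × Set X}
    (hb : b ∈ Cset 𝒮 S H) (h1 : SPCovers 𝒮 a b)
    (h2 : SPCovers 𝒮 a ((H, (∅ : Set X)) : Set X × Set X)) : False :=
  h2.2.2.2 ⟨b, hb.1, splt_bot hH hb.2.1, h1.2.2.1⟩

lemma not_splt_bot (h : OneNestedCompatible 𝒮) (hH : H ≠ ∅) {b : Set X × Set X}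
    (hbS : b ∈ 𝒮) (hb : b.2 = H ∨ b = ((H, (∅ : Set X)) : Set X × Set X)) :
    ¬ splt b ((H, (∅ : Set X)) : Set X × Set X) := by
  rintro ⟨hne, hc⟩
  rcases hb with hb | hb
  · rcases hc with hc | hc | hc
    · obtain ⟨x, hx⟩ := pair_nonempty h.1 hbS
      exact pair_disj h.1 hbS hx (hb.symm ▸ (hc (Or.inl hx) : _ ∈ H))
    · obtain ⟨x, hx⟩ := pair_nonempty h.1 hbS
      exact (hc (Or.inl hx) : x ∈ (∅ : Set X))
    · exact hH (hb ▸ hc.2.1)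
  · exact hne hb

lemma splt_to_head (h : OneNestedCompatible 𝒮) (hH : H ≠ ∅)
    (hmem : ((S, H) : Set X × Set X) ∈ 𝒮) {a r : Set X × Set X}
    (haS : a ∈ 𝒮) (ha2 : a.2 ≠ H) (haSH : S ∪ H ⊆ a.1)
    (hrS : r ∈ 𝒮) (hr2 : r.2 = H) : splt r a := by
  have hne : r ≠ a := fun he => ha2 (he ▸ hr2)
  obtain ⟨x, hxH⟩ := H_ne_mem hH
  rcases eo4_or (h.2.2.2.2.1 r hrS a haS hne) with hc | hc | hc | hc
  · exact hc
  · exfalso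
    obtain ⟨-, hc⟩ := hc
    rcases hc with hc | hc | hc
    · exact pair_disj h.1 hrS (hc (Or.inl (haSH (Or.inr hxH)))) (hr2.symm ▸ hxH)
    · obtain ⟨y, hyS⟩ := pair_nonempty h.1 hmem
      exact pair_disj h.1 hmem hyS ((hr2 ▸ hc (Or.inl (haSH (Or.inl hyS)))) : _ ∈ H)
    · exact ha2 (hc.2.1 ▸ hr2)
  · exact (Set.eq_empty_iff_forall_notMem.mp hc x
      ⟨Or.inr ((hr2.symm : H = r.2) ▸ hxH), Or.inl (haSH (Or.inr hxH))⟩).elim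
  · exact (ha2 (hc.2.1.symm.trans hr2)).elim

lemma head_child_max (h : OneNestedCompatible 𝒮) (hH : H ≠ ∅)
    (hmem : ((S, H) : Set X × Set X) ∈ 𝒮) {a b : Set X × Set X}
    (hb : b ∈ Cset 𝒮 S H) (hcov : SPCovers 𝒮 a b)
    (ha2 : a.2 ≠ H) (haSH : S ∪ H ⊆ a.1) : ∀ r ∈ Cset 𝒮 S H, r.1 ⊆ b.1 := by
  intro r hr
  by_contra hc'
  rcases C_comparable h hH hmem hr hb with hc | hc
  · exact hc' hc
  · have hlt : b.1 ⊂ r.1 := ⟨hc, hc'⟩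
    exact hcov.2.2.2 ⟨r, hr.1,
      (splt_T_iff h hH hb.1 hr.1 hb.2.1 hr.2.1).mpr hlt,
      splt_to_head h hH hmem hcov.1 ha2 haSH hr.1 hr.2.1⟩

lemma exists_desc [Fintype X] (h : OneNestedCompatible 𝒮) (hH : H ≠ ∅)
    (hmem : ((S, H) : Set X × Set X) ∈ 𝒮) :
    ∀ n : ℕ, ∀ c ∈ Cset 𝒮 S H, c.1.ncard ≤ n →
      ∃ M : List (Set X × Set X), M.head? = some c ∧ (∀ p ∈ M, p ∈ Cset 𝒮 S H) ∧
        List.Chain' (fun a b => SPCovers 𝒮 a b) (M ++ [((H, (∅ : Set X)) : Set X × Set X)]) ∧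
        (∀ p ∈ M, p.1 ⊆ c.1) ∧ (∀ r ∈ Cset 𝒮 S H, r.1 ⊆ c.1 → r ∈ M) := by
  intro n
  induction n with
  | zero =>
    intro c hc hn
    exact absurd ((Set.ncard_eq_zero (Set.toFinite _)).mp (Nat.le_zero.mp hn))
      (pair_nonempty h.1 hc.1).ne_empty
  | succ n ih =>
    intro c hc hn
    by_cases hB : ∃ r ∈ Cset 𝒮 S H, r.1 ⊂ c.1
    · have hBsub : {r | r ∈ Cset 𝒮 S H ∧ r.1 ⊂ c.1} ⊆ Cset 𝒮 S H := fun r hr => hr.1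
      obtain ⟨m, hmB, hmmax⟩ := C_max_of h hH hmem hBsub hB
      have hcov : SPCovers 𝒮 c m := by
        refine cover_within_C h hH hmem hc hmB.1 hmB.2 ?_
        rintro ⟨r, hr, h1, h2⟩
        exact h1.not_subset (hmmax r ⟨hr, h2⟩)
      have hmlt : m.1.ncard ≤ n := by
        have := Set.ncard_lt_ncard hmB.2 (Set.toFinite _)
        omega
      obtain ⟨M', hhead, hmemC, hchain, hsub, hall⟩ := ih m hmB.1 hmlt
      obtain ⟨m', t, rfl⟩ : ∃ m' t, M' = m' :: t := by
        cases M' with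
        | nil => simp at hhead
        | cons x l => exact ⟨x, l, rfl⟩
      have hm' : m' = m := by simpa using hhead
      subst hm'
      refine ⟨c :: m' :: t, rfl, ?_, ?_, ?_, ?_⟩
      · intro p hp
        rcases List.mem_cons.mp hp with rfl | hp
        · exact hc
        · exact hmemC p hp
      · exact List.isChain_cons_cons.mpr ⟨hcov, hchain⟩
      · intro p hp
        rcases List.mem_cons.mp hp with rfl | hp
        · exact subset_rfl
        · exact (hsub p hp).trans hmB.2.subset
      · intro r hr hrc
        by_cases hrc' : r = c
        · exact hrc' ▸ List.mem_cons_self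
        · have hne : r.1 ≠ c.1 := fun he => hrc' (C_eq hr hc he.subset he.symm.subset)
          exact List.mem_cons_of_mem _ (hall r hr (hmmax r ⟨hr, ⟨hrc, fun hcr => hne (le_antisymm hrc hcr)⟩⟩))
    · refine ⟨[c], rfl, ?_, ?_, ?_, ?_⟩
      · intro p hp
        rcases List.mem_singleton.mp hp with rfl
        exact hc
      · exact List.isChain_pair.mpr (cover_bot h hH hmem hc hB)
      · intro p hp
        rcases List.mem_singleton.mp hp with rfl
        exact subset_rfl
      · intro r hr hrc
        by_cases hrc' : r = c
        · exact hrc' ▸ List.mem_singleton_self _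
        · have hne : r.1 ≠ c.1 := fun he => hrc' (C_eq hr hc he.subset he.symm.subset)
          exact absurd ⟨r, hr, hrc, fun hcr => hne (le_antisymm hrc hcr)⟩ hB

lemma desc_unique (h : OneNestedCompatible 𝒮) (hH : H ≠ ∅)
    (hmem : ((S, H) : Set X × Set X) ∈ 𝒮) :
    ∀ M M' : List (Set X × Set X),
      List.Chain' (fun a b => SPCovers 𝒮 a b) M →
      List.Chain' (fun a b => SPCovers 𝒮 a b) M' →
      M.getLast? = some ((H, (∅ : Set X)) : Set X × Set X) →
      M'.getLast? = some ((H, (∅ : Set X)) : Set X × Set X) →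
      (∀ p ∈ M, p ∈ Cset 𝒮 S H ∨ p = ((H, (∅ : Set X)) : Set X × Set X)) →
      (∀ p ∈ M', p ∈ Cset 𝒮 S H ∨ p = ((H, (∅ : Set X)) : Set X × Set X)) →
      M.head? = M'.head? → M = M' := by
  intro M
  induction M with
  | nil => intro M' _ _ hlast _ _ _ _; simp at hlast
  | cons a M ihM =>
    intro M' hch hch' hlast hlast' hmem1 hmem2 hhead
    cases M with
    | nil =>
      have ha : a = ((H, (∅ : Set X)) : Set X × Set X) := by simpa using hlast
      cases M' with
      | nil => simp at hhead
      | cons a' M'' =>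
        have ha' : a' = a := by simpa using hhead.symm
        cases M'' with
        | nil => rw [ha']
        | cons b' t' =>
          exfalso
          have hcov : SPCovers 𝒮 a' b' := (List.isChain_cons_cons.mp hch').1
          have hb' : b' ∈ Cset 𝒮 S H ∨ b' = ((H, (∅ : Set X)) : Set X × Set X) :=
            hmem2 b' (List.mem_cons_of_mem _ (List.mem_cons_self))
          have hb'2 : b'.2 = H ∨ b' = ((H, (∅ : Set X)) : Set X × Set X) := by
            rcases hb' with hb' | hb'
            · exact Or.inl hb'.2.1
            · exact Or.inr hb'
          have hsp := hcov.2.2.1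
          rw [ha', ha] at hsp
          exact not_splt_bot h hH hcov.2.1 hb'2 hsp
    | cons b t =>
      cases M' with
      | nil => simp at hhead
      | cons a' M'' =>
        have ha' : a' = a := by simpa using hhead.symm
        subst ha'
        cases M'' with
        | nil =>
          exfalso
          have ha : a' = ((H, (∅ : Set X)) : Set X × Set X) := by simpa using hlast'
          have hcov : SPCovers 𝒮 a' b := (List.isChain_cons_cons.mp hch).1
          have hb2 : b.2 = H ∨ b = ((H, (∅ : Set X)) : Set X × Set X) := by
            rcases hmem1 b (List.mem_cons_of_mem _ (List.mem_cons_self)) with hb | hb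
            · exact Or.inl hb.2.1
            · exact Or.inr hb
          have hsp := hcov.2.2.1
          rw [ha] at hsp
          exact not_splt_bot h hH hcov.2.1 hb2 hsp
        | cons b' t' =>
          have hcov1 : SPCovers 𝒮 a' b := (List.isChain_cons_cons.mp hch).1
          have hcov2 : SPCovers 𝒮 a' b' := (List.isChain_cons_cons.mp hch').1
          have hbb' : b = b' := by
            rcases hmem1 b (List.mem_cons_of_mem _ (List.mem_cons_self)) with hb | hb <;>
              rcases hmem2 b' (List.mem_cons_of_mem _ (List.mem_cons_self)) with hb' | hb'
            · exact cover_child_unique_C h hH hmem hb hb' hcov1 hcov2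
            · exact absurd (not_cover_bot_and_C hH hb hcov1 (hb' ▸ hcov2)) (fun f => f)
            · exact absurd (not_cover_bot_and_C hH hb' hcov2 (hb ▸ hcov1)) (fun f => f)
            · exact hb.trans hb'.symm
          subst hbb'
          have htail : b :: t = b :: t' := by
            refine ihM (b :: t') (List.isChain_cons_cons.mp hch).2 (List.isChain_cons_cons.mp hch').2
              ?_ ?_ ?_ ?_ rfl
            · exact (List.getLast?_cons_cons ▸ hlast : _)
            · exact (List.getLast?_cons_cons ▸ hlast' : _)
            · exact fun p hp => hmem1 p (List.mem_cons_of_mem _ hp)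
            · exact fun p hp => hmem2 p (List.mem_cons_of_mem _ hp)
          rw [htail]

end Structure

end AuxLemmas

/-- If `𝒮` is 1-nested compatible and `(S,H) ∈ 𝒮` with `H ≠ ∅`, then there is a
unique finite sequence `(q₀,…,q_m)` of elements of `𝒮` with `m ≥ 2` such that `q_j` covers
`q_{j+1}` for all `0 ≤ j < m`, `q_m = (H,∅)`, every interior `q_j` has second component `H`,
`q_i = (S,H)` for some `1 ≤ i ≤ m−1`, and `q₀ = (S₊,H₊)` satisfies `S ∪ H ⊆ S₊` and `H₊ ≠ H`. -/
theorem unique_path_exists {X : Type*} [Fintype X] [Nonempty X]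
    (𝒮 : Set (Set X × Set X)) (h : OneNestedCompatible 𝒮)
    (S H : Set X) (hmem : ((S, H) : Set X × Set X) ∈ 𝒮) (hH : H ≠ ∅) :
    ∃! L : List (Set X × Set X), IsSPPath 𝒮 S H L := by
  classical
  have hSH_C : ((S, H) : Set X × Set X) ∈ Cset 𝒮 S H := SH_mem_C hmem
  obtain ⟨c₁, hc₁C, hc₁max⟩ := C_max_of h hH hmem (subset_refl (Cset 𝒮 S H)) ⟨_, hSH_C⟩
  obtain ⟨M, hMhead, hMC, hMchain, hMsub, hMall⟩ :=
    exists_desc h hH hmem c₁.1.ncard c₁ hc₁C le_rfl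
  obtain ⟨m, t, rfl⟩ : ∃ m t, M = m :: t := by
    cases M with
    | nil => simp at hMhead
    | cons x l => exact ⟨x, l, rfl⟩
  have hm : m = c₁ := by simpa using hMhead
  subst hm
  obtain ⟨q₀, hq₀⟩ := exists_cover h hc₁C.1 (by rw [hc₁C.2.1]; exact hH)
  obtain ⟨htop1, htop2⟩ := cover_max_props h hH hmem hc₁C hc₁max hq₀
  have hS_sub_c₁ : S ⊆ m.1 := hc₁max _ hSH_C
  have hSH_sub : S ∪ H ⊆ q₀.1 := by
    intro z hz
    rcases hz with hz | hz
    · exact htop1 (Or.inl (hS_sub_c₁ hz))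
    · exact htop1 (Or.inr hz)
  refine ⟨q₀ :: ((m :: t) ++ [((H, (∅ : Set X)) : Set X × Set X)]),
    ⟨?_, ?_, ?_, ?_, ?_, ?_⟩, ?_⟩
  · simp
  · exact List.isChain_cons_cons.mpr ⟨hq₀, hMchain⟩
  · exact List.getLast?_concat (l := q₀ :: m :: t)
  · intro i p hi1 hi2 hp
    obtain ⟨j, rfl⟩ : ∃ j, i = j + 1 := ⟨i - 1, by omega⟩
    simp only [List.length_cons, List.length_append, List.length_nil] at hi2
    rw [List.getElem?_cons_succ, List.getElem?_append,
      if_pos (by simp only [List.length_cons]; omega : j < (m :: t).length)] at hp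
    exact (hMC p (List.mem_of_getElem? hp)).2.1
  · obtain ⟨n, hn, hEq⟩ := List.mem_iff_getElem.mp (hMall (S, H) hSH_C hS_sub_c₁)
    refine ⟨n + 1, by omega, ?_, ?_⟩
    · simp only [List.length_cons, List.length_append, List.length_nil] at hn ⊢
      omega
    · rw [List.getElem?_cons_succ, List.getElem?_append, if_pos hn,
        List.getElem?_eq_getElem hn, hEq]
  · exact ⟨q₀, rfl, hSH_sub, htop2⟩
  · -- uniqueness
    intro L' hL'
    obtain ⟨hlen', hch', hlast', hint', ⟨i, hi1, hi2, hiSH⟩, a, hhead', haSH, ha2⟩ := hL'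
    obtain ⟨a', L'', rfl⟩ : ∃ a' L'', L' = a' :: L'' := by
      cases L' with
      | nil => simp at hlen'
      | cons x l => exact ⟨_, _, rfl⟩
    obtain ⟨b, rest, rfl⟩ : ∃ b rest, L'' = b :: rest := by
      cases L'' with
      | nil => simp at hlen'
      | cons x l => exact ⟨_, _, rfl⟩
    have ha' : a' = a := by simpa using hhead'
    subst ha'
    -- pairwise splt along the path
    have hchR : List.Chain' (fun x y => x ∈ 𝒮 ∧ y ∈ 𝒮 ∧ splt y x) (a' :: b :: rest) :=
      hch'.imp (fun x y hxy => ⟨hxy.1, hxy.2.1, hxy.2.2.1⟩)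
    have hpw : List.Pairwise (fun x y => x ∈ 𝒮 ∧ y ∈ 𝒮 ∧ splt y x) (a' :: b :: rest) :=
      (@List.isChain_iff_pairwise _ _ _
        ⟨fun hxy hyz => ⟨hxy.1, hyz.2.1,
          splt_trans' h.1 hyz.2.1 hxy.2.1 hxy.1 hyz.2.2 hxy.2.2⟩⟩).mp hchR
    have hilt : i < (a' :: b :: rest).length := by omega
    have hpi : (a' :: b :: rest)[i] = ((S, H) : Set X × Set X) := by
      rw [List.getElem?_eq_getElem hilt] at hiSH
      exact Option.some.inj hiSH
    have hintC : ∀ j : ℕ, ∀ p : Set X × Set X, 1 ≤ j → j + 1 < (a' :: b :: rest).length →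
        (a' :: b :: rest)[j]? = some p → p ∈ Cset 𝒮 S H := by
      intro j p hj1 hj2 hp
      have hp2 : p.2 = H := hint' j p hj1 hj2 hp
      have hjlt : j < (a' :: b :: rest).length := by omega
      have hpj : (a' :: b :: rest)[j] = p := by
        rw [List.getElem?_eq_getElem hjlt] at hp
        exact Option.some.inj hp
      rcases lt_trichotomy j i with hji | hji | hji
      · have hRel := (List.pairwise_iff_getElem.mp hpw) j i hjlt hilt hji
        rw [hpj, hpi] at hRel
        have hpS : p ∈ 𝒮 := hRel.1
        have : S ⊂ p.1 := (splt_T_iff h hH hmem hpS rfl hp2).mp hRel.2.2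
        exact ⟨hpS, hp2, Or.inr this.subset⟩
      · subst hji
        have hpe : p = ((S, H) : Set X × Set X) := hpj.symm.trans hpi
        exact hpe ▸ hSH_C
      · have hRel := (List.pairwise_iff_getElem.mp hpw) i j hilt hjlt hji
        rw [hpj, hpi] at hRel
        have hpS : p ∈ 𝒮 := hRel.2.1
        have : p.1 ⊂ S := (splt_T_iff h hH hpS hmem hp2 rfl).mp hRel.2.2
        exact ⟨hpS, hp2, Or.inl this.subset⟩
    have hbC : b ∈ Cset 𝒮 S H := by
      refine hintC 1 b le_rfl ?_ (by simp)
      simp only [List.length_cons] at hlen' ⊢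
      omega
    have hcov_ab : SPCovers 𝒮 a' b := (List.isChain_cons_cons.mp hch').1
    have hbmax := head_child_max h hH hmem hbC hcov_ab ha2 haSH
    have hbc₁ : b = m := C_eq hbC hc₁C (hc₁max b hbC) (hbmax m hc₁C)
    have haq₀ : a' = q₀ :=
      cover_unique_above h hH (hbc₁ ▸ hcov_ab) hq₀
        (fun z hz => haSH (Or.inr hz)) (fun z hz => htop1 (Or.inr hz))
    have hmemtail : ∀ p ∈ b :: rest, p ∈ Cset 𝒮 S H ∨
        p = ((H, (∅ : Set X)) : Set X × Set X) := by
      intro p hp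
      obtain ⟨k, hk, hkeq⟩ := List.mem_iff_getElem.mp hp
      have hk1 : k + 1 < (a' :: b :: rest).length := by
        simp only [List.length_cons] at hk ⊢
        omega
      have hkL : (a' :: b :: rest)[k+1]'hk1 = p := by
        rw [List.getElem_cons_succ]
        exact hkeq
      by_cases hcase : k + 1 + 1 < (a' :: b :: rest).length
      · exact Or.inl (hintC (k+1) p (by omega) hcase
          (by rw [List.getElem?_eq_getElem hk1, hkL]))
      · have hlastp : (a' :: b :: rest).getLast? = some p := by
          rw [List.getLast?_eq_getElem?]
          have he : (a' :: b :: rest).length - 1 = k + 1 := by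
            simp only [List.length_cons] at hcase hk1 ⊢
            omega
          rw [he, List.getElem?_eq_getElem hk1, hkL]
        rw [hlast'] at hlastp
        exact Or.inr (Option.some.inj hlastp).symm
    have htail : b :: rest = (m :: t) ++ [((H, (∅ : Set X)) : Set X × Set X)] := by
      refine desc_unique h hH hmem _ _ (List.isChain_cons_cons.mp hch').2 hMchain
        ?_ List.getLast?_concat hmemtail ?_ ?_
      · rw [← List.getLast?_cons_cons (a := a')]
        exact hlast'
      · intro p hp
        rcases List.mem_append.mp hp with hp | hp
        · exact Or.inl (hMC p hp)
        · exact Or.inr (List.mem_singleton.mp hp)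
      · rw [hbc₁]
        rfl
    rw [haq₀, htail]
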